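/- Let C be a doubly even binary code and θ : C × C → F_2 a code cocycle, i.e., θ satisfies (1) θ(v,w)+θ(u+v,w)+θ(u,v+w)+θ(u,v) = |u & v & w| mod 2, (2) θ(v,w)+θ(w,v) = (1/2)|v & w| mod 2, and (3) θ(v,v) = (1/4)|v| mod 2, for all u,v,w ∈ C. Then for any decomposition C = V ⊕ W into complementary subspaces and v1,v2 ∈ V, w1,w2 ∈ W: θ(v1+w1, v2+w2) = θ(v1,v2) + θ(w1,w2) + θ(v1,w1) + θ(w2,v2) + θ(v1+v2, w1+w2) + (1/2)|v2 & (w1+w2)| + |v1 & v2 & (w1+w2)| + |w1 & w2 & v2| + |v1 & w1 & (v2+w2)| mod 2. -/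
import Mathlib


def wt {n : ℕ} (v : Fin n → ZMod 2) : ℕ := (Finset.univ.filter fun i => v i ≠ 0).card

def band {n : ℕ} (v w : Fin n → ZMod 2) : Fin n → ZMod 2 := fun i => v i * w i

theorem stmt_11 {n : ℕ} (C : Submodule (ZMod 2) (Fin n → ZMod 2))
    (hC : ∀ c ∈ C, 4 ∣ wt c)
    (θ : (Fin n → ZMod 2) → (Fin n → ZMod 2) → ZMod 2)
    (h1 : ∀ u ∈ C, ∀ v ∈ C, ∀ w ∈ C,
      θ v w + θ (u + v) w + θ u (v + w) + θ u v = (wt (band u (band v w)) : ZMod 2))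
    (h2 : ∀ v ∈ C, ∀ w ∈ C, θ v w + θ w v = ((wt (band v w) / 2 : ℕ) : ZMod 2))
    (h3 : ∀ v ∈ C, θ v v = ((wt v / 4 : ℕ) : ZMod 2))
    (V W : Submodule (ZMod 2) (Fin n → ZMod 2))
    (hV : V ≤ C) (hW : W ≤ C) (hsup : V ⊔ W = C) (hinf : V ⊓ W = ⊥) :
    ∀ v1 ∈ V, ∀ v2 ∈ V, ∀ w1 ∈ W, ∀ w2 ∈ W,
      θ (v1 + w1) (v2 + w2) =
        θ v1 v2 + θ w1 w2 + θ v1 w1 + θ w2 v2 + θ (v1 + v2) (w1 + w2)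
        + ((wt (band v2 (w1 + w2)) / 2 : ℕ) : ZMod 2)
        + (wt (band v1 (band v2 (w1 + w2))) : ZMod 2)
        + (wt (band w1 (band w2 v2)) : ZMod 2)
        + (wt (band v1 (band w1 (v2 + w2))) : ZMod 2) := by
  intro v1 hv1 v2 hv2 w1 hw1 w2 hw2
  have hv1C : v1 ∈ C := hV hv1
  have hv2C : v2 ∈ C := hV hv2
  have hw1C : w1 ∈ C := hW hw1
  have hw2C : w2 ∈ C := hW hw2
  have hA := h1 v1 hv1C w1 hw1C (v2 + w2) (C.add_mem hv2C hw2C)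
  have hB := h1 v1 hv1C v2 hv2C (w1 + w2) (C.add_mem hw1C hw2C)
  have hD := h1 w1 hw1C w2 hw2C v2 hv2C
  have hE := h2 v2 hv2C (w1 + w2) (C.add_mem hw1C hw2C)
  have e1 : w1 + (v2 + w2) = v2 + (w1 + w2) := by ring
  have e2 : w2 + v2 = v2 + w2 := by ring
  rw [e1] at hA
  rw [e2] at hD
  have h0 : (2 : ZMod 2) = 0 := rfl
  linear_combination hA + hB + hD + hE -
    (θ v1 v2 + θ w1 w2 + θ v1 w1 + θ w2 v2 + θ (v1 + v2) (w1 + w2) +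
      θ w1 (v2 + w2) + θ v1 (v2 + (w1 + w2)) + θ v2 (w1 + w2) + θ (w1 + w2) v2) * h0
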